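/- Let C be a symmetric positive definite dX × dX real matrix, D a symmetric dX × dX real matrix, and Hx a dY × dX real matrix with dY ≤ dX and rank dY. Set V = Hx C Hx*. Then Tr(V^{-1} Hx D Hx* V^{-1} Hx D Hx*) ≤ Tr(C^{-1} D C^{-1} D). -/

import Mathlib

open Matrix

lemma trace_transpose_mul_self_nonneg {n m : ℕ} (X : Matrix (Fin n) (Fin m) ℝ) :
    0 ≤ (Xᵀ * X).trace := by
  rw [Matrix.trace]
  refine Finset.sum_nonneg fun i _ => ?_
  simp only [Matrix.diag_apply, Matrix.mul_apply, Matrix.transpose_apply]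
  exact Finset.sum_nonneg fun j _ => mul_self_nonneg _

lemma key_nonneg {n : ℕ} (M R S : Matrix (Fin n) (Fin n) ℝ)
    (hM : Mᵀ = M) (hR : Rᵀ = R) (hS : Sᵀ = S)
    (hRR : R * R = R) (hSS : S * S = S) :
    0 ≤ (M * R * M * S).trace := by
  have ht : (S*M*R)ᵀ = R * M * S := by
    rw [Matrix.transpose_mul, Matrix.transpose_mul, hR, hS, hM, Matrix.mul_assoc]
  have h1 : (S*M*R)ᵀ*(S*M*R) = R * (M * (S * (M * R))) := by
    rw [ht]
    simp only [Matrix.mul_assoc]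
    rw [← Matrix.mul_assoc S S (M * R), hSS]
  have h2 : ((S*M*R)ᵀ*(S*M*R)).trace = (M * R * M * S).trace := by
    rw [h1, Matrix.trace_mul_comm]
    rw [show M * (S * (M * R)) * R = M * S * (M * (R * R)) from by
      simp only [Matrix.mul_assoc]]
    rw [hRR, show M * S * (M * R) = (M*S) * (M*R) from by simp only [Matrix.mul_assoc],
      Matrix.trace_mul_comm]
    simp only [Matrix.mul_assoc]
  rw [← h2]
  exact trace_transpose_mul_self_nonneg _

lemma proj_trace_le {n : ℕ} (M P : Matrix (Fin n) (Fin n) ℝ)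
    (hM : Mᵀ = M) (hPt : Pᵀ = P) (hPP : P * P = P) :
    (P * M * P * M).trace ≤ (M * M).trace := by
  set Q : Matrix (Fin n) (Fin n) ℝ := 1 - P with hQ
  have hQt : Qᵀ = Q := by simp [hQ, transpose_sub, hPt]
  have hQQ : Q * Q = Q := by
    simp [hQ, sub_mul, mul_sub, hPP]
  have expand : M * M = M*P*(M*P) + M*P*(M*Q) + M*Q*(M*P) + M*Q*(M*Q) := by
    have h1 : P + Q = 1 := by simp [hQ]
    calc M * M = M*(P+Q)*(M*(P+Q)) := by rw [h1]; simp [Matrix.mul_assoc]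
    _ = _ := by simp only [Matrix.mul_add, Matrix.add_mul]; abel
  have e0 : (M*P*(M*P)).trace = (P*M*P*M).trace := by
    rw [show M*P*(M*P) = M * (P*(M*P)) from by simp only [Matrix.mul_assoc],
      Matrix.trace_mul_comm]
    simp only [Matrix.mul_assoc]
  have e1 : 0 ≤ (M*P*(M*Q)).trace := by
    have := key_nonneg M P Q hM hPt hQt hPP hQQ
    rwa [show M*P*M*Q = M*P*(M*Q) from by simp only [Matrix.mul_assoc]] at this
  have e2 : 0 ≤ (M*Q*(M*P)).trace := by
    have := key_nonneg M Q P hM hQt hPt hQQ hPP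
    rwa [show M*Q*M*P = M*Q*(M*P) from by simp only [Matrix.mul_assoc]] at this
  have e3 : 0 ≤ (M*Q*(M*Q)).trace := by
    have := key_nonneg M Q Q hM hQt hQt hQQ hQQ
    rwa [show M*Q*M*Q = M*Q*(M*Q) from by simp only [Matrix.mul_assoc]] at this
  rw [expand]
  simp only [Matrix.trace_add]
  linarith [e0, e1, e2, e3]

lemma main_ineq {dY dX : ℕ} (A : Matrix (Fin dY) (Fin dX) ℝ)
    (M : Matrix (Fin dX) (Fin dX) ℝ) (W : Matrix (Fin dY) (Fin dY) ℝ)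
    (hM : Mᵀ = M) (hWt : Wᵀ = W)
    (hW1 : W * (A * Aᵀ) = 1) :
    (W * (A * M * Aᵀ) * W * (A * M * Aᵀ)).trace ≤ (M * M).trace := by
  have hPt : (Aᵀ * W * A)ᵀ = Aᵀ * W * A := by
    rw [Matrix.transpose_mul, Matrix.transpose_mul, Matrix.transpose_transpose, hWt,
      Matrix.mul_assoc]
  have hPP : (Aᵀ * W * A) * (Aᵀ * W * A) = Aᵀ * W * A := by
    rw [show Aᵀ * W * A * (Aᵀ * W * A) = Aᵀ * (W * (A * Aᵀ) * (W * A)) from by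
      simp only [Matrix.mul_assoc], hW1]
    simp only [Matrix.one_mul, Matrix.mul_assoc]
  have hLHS : (W * (A * M * Aᵀ) * W * (A * M * Aᵀ)).trace
      = ((Aᵀ * W * A) * M * (Aᵀ * W * A) * M).trace := by
    rw [show W * (A * M * Aᵀ) * W * (A * M * Aᵀ) =
        (W * (A * (M * (Aᵀ * (W * (A * M)))))) * Aᵀ from by simp only [Matrix.mul_assoc],
      Matrix.trace_mul_comm]
    simp only [Matrix.mul_assoc]
  rw [hLHS]
  exact proj_trace_le M (Aᵀ * W * A) hM hPt hPP

theorem information_comparison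
    (dY dX : ℕ) (hdim : dY ≤ dX)
    (C D : Matrix (Fin dX) (Fin dX) ℝ)
    (hC : C.PosDef) (hD : Dᵀ = D)
    (Hx : Matrix (Fin dY) (Fin dX) ℝ) (hrank : Hx.rank = dY) :
    let V : Matrix (Fin dY) (Fin dY) ℝ := Hx * C * Hxᵀ
    (V⁻¹ * (Hx * D * Hxᵀ) * V⁻¹ * (Hx * D * Hxᵀ)).trace ≤
      (C⁻¹ * D * C⁻¹ * D).trace := by
  intro V
  obtain ⟨S, hS2, hSsa⟩ : ∃ S : Matrix (Fin dX) (Fin dX) ℝ, S * S = C ∧ IsSelfAdjoint S := by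
    open scoped MatrixOrder in
    obtain ⟨X, hX, -, hXC⟩ := CFC.exists_sqrt_of_isSelfAdjoint_of_quasispectrumRestricts
      hC.isHermitian (QuasispectrumRestricts.nnreal_of_nonneg hC.posSemidef.nonneg)
    exact ⟨X, hXC, hX⟩
  have hSt : Sᵀ = S := by
    have := hSsa.star_eq
    rwa [Matrix.star_eq_conjTranspose, Matrix.conjTranspose_eq_transpose_of_trivial] at this
  have hCt : Cᵀ = C := by
    have := hC.isHermitian
    rwa [Matrix.IsHermitian, Matrix.conjTranspose_eq_transpose_of_trivial] at this
  have hSdetu : IsUnit S.det := by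
    have hCdet : C.det ≠ 0 := hC.det_pos.ne'
    rw [← hS2, Matrix.det_mul] at hCdet
    exact isUnit_iff_ne_zero.mpr (left_ne_zero_of_mul hCdet)
  have hSS' : S * S⁻¹ = 1 := Matrix.mul_nonsing_inv S hSdetu
  have hS'S : S⁻¹ * S = 1 := Matrix.nonsing_inv_mul S hSdetu
  have hSit : S⁻¹ᵀ = S⁻¹ := by rw [Matrix.transpose_nonsing_inv, hSt]
  have hCinv : C⁻¹ = S⁻¹ * S⁻¹ := by rw [← hS2, Matrix.mul_inv_rev]
  -- injectivity of vecMul Hx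
  have hli : LinearIndependent ℝ (fun i => Hx i) := by
    apply linearIndependent_iff_card_eq_finrank_span.mpr
    rw [Fintype.card_fin, Set.finrank]
    exact hrank.symm.trans (Matrix.rank_eq_finrank_span_row Hx)
  have hinj : Function.Injective Hx.vecMul := Matrix.vecMul_injective_iff.mpr hli
  -- V is positive definite
  have hV : V.PosDef := by
    refine Matrix.PosDef.of_dotProduct_mulVec_pos ?_ ?_
    · rw [Matrix.IsHermitian, Matrix.conjTranspose_eq_transpose_of_trivial]
      show (Hx * C * Hxᵀ)ᵀ = Hx * C * Hxᵀ
      rw [Matrix.transpose_mul, Matrix.transpose_mul, Matrix.transpose_transpose, hCt,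
        Matrix.mul_assoc]
    · intro x hx
      have hyne : x ᵥ* Hx ≠ 0 := by
        intro h
        exact hx (hinj (by simpa using h))
      have hpos := hC.dotProduct_mulVec_pos hyne
      rw [star_trivial] at hpos ⊢
      show 0 < x ⬝ᵥ ((Hx * C * Hxᵀ) *ᵥ x)
      rw [← Matrix.mulVec_mulVec, ← Matrix.mulVec_mulVec, dotProduct_mulVec,
        Matrix.mulVec_transpose]
      exact hpos
  have hVt : Vᵀ = V := by
    have := hV.isHermitian
    rwa [Matrix.IsHermitian, Matrix.conjTranspose_eq_transpose_of_trivial] at this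
  have hVdetu : IsUnit V.det := isUnit_iff_ne_zero.mpr hV.det_pos.ne'
  have hVit : V⁻¹ᵀ = V⁻¹ := by rw [Matrix.transpose_nonsing_inv, hVt]
  -- key algebraic identities
  have hMt : (S⁻¹ * D * S⁻¹)ᵀ = S⁻¹ * D * S⁻¹ := by
    rw [Matrix.transpose_mul, Matrix.transpose_mul, hSit, hD, Matrix.mul_assoc]
  have hVA : V = (Hx * S) * (Hx * S)ᵀ := by
    rw [Matrix.transpose_mul, hSt, show Hx * S * (S * Hxᵀ) = Hx * (S * S) * Hxᵀ from by
      simp only [Matrix.mul_assoc], hS2]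
  have hB : Hx * D * Hxᵀ = (Hx * S) * (S⁻¹ * D * S⁻¹) * (Hx * S)ᵀ := by
    rw [Matrix.transpose_mul, hSt]
    rw [show Hx * S * (S⁻¹ * D * S⁻¹) * (S * Hxᵀ) =
        Hx * ((S * S⁻¹) * (D * ((S⁻¹ * S) * Hxᵀ))) from by simp only [Matrix.mul_assoc],
      hSS', hS'S]
    simp [Matrix.mul_assoc]
  have hW1 : V⁻¹ * ((Hx * S) * (Hx * S)ᵀ) = 1 := by
    rw [← hVA]; exact Matrix.nonsing_inv_mul V hVdetu
  have hRHS : (C⁻¹ * D * C⁻¹ * D).trace = ((S⁻¹ * D * S⁻¹) * (S⁻¹ * D * S⁻¹)).trace := by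
    rw [hCinv, show S⁻¹ * S⁻¹ * D * (S⁻¹ * S⁻¹) * D =
        S⁻¹ * (S⁻¹ * (D * (S⁻¹ * (S⁻¹ * D)))) from by simp only [Matrix.mul_assoc],
      Matrix.trace_mul_comm]
    simp only [Matrix.mul_assoc]
  rw [hB, hRHS]
  exact main_ineq (Hx * S) (S⁻¹ * D * S⁻¹) V⁻¹ hMt hVit hW1
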